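/- Let Ω ⊂ ℍ_s^n be a self-stem-preserving slice-domain and let f : Ω → ℍ be weakly slice regular. Then the zero set 𝒵(f) := {q ∈ Ω : f(q) = 0} is a path-slice analytic subset of Ω. -/

import Mathlib

open scoped Quaternion
open Classical

attribute [local instance] Classical.propDecidable

set_option maxHeartbeats 1000000
set_option synthInstance.maxHeartbeats 400000

noncomputable section

/-- Continuous-path carrier type: maps from `[0,1]` to `ℂⁿ`. -/
abbrev PathC (n : ℕ) := unitInterval → (Fin n → ℂ)

/-- The sphere of quaternionic imaginary units `𝕊 = {I : I² = -1}`. -/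
def SQ : Set ℍ[ℝ] := {I | I ^ 2 = -1}

/-- A quaternion is real if it is the image of a real number. -/
def IsRealQ (p : ℍ[ℝ]) : Prop := ∃ r : ℝ, p = (r : ℍ[ℝ])

/-- `Ψ_i^I : ℂⁿ → ℂ_Iⁿ`, componentwise `x + y i ↦ x + y I`. -/
def psi {n : ℕ} (I : ℍ[ℝ]) (z : Fin n → ℂ) : Fin n → ℍ[ℝ] :=
  fun k => ((z k).re : ℍ[ℝ]) + (z k).im • I

/-- The slice `ℂ_I = {x + y I}` as a subset of the quaternions. -/
def CI (I : ℍ[ℝ]) : Set ℍ[ℝ] := {p | ∃ x y : ℝ, p = (x : ℍ[ℝ]) + y • I}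

/-- The weakly slice cone `ℍ_sⁿ = ⋃_{I ∈ 𝕊} ℂ_Iⁿ`. -/
def HSliceCone (n : ℕ) : Set (Fin n → ℍ[ℝ]) := ⋃ I ∈ SQ, Set.range (psi (n := n) I)

/-- Membership in `𝒫(ℂⁿ)`: continuous with real initial point. -/
def IsPathP {n : ℕ} (γ : PathC n) : Prop :=
  Continuous γ ∧ ∀ k, ((γ 0) k).im = 0

/-- `γ^I ⊂ Ω`. -/
def pathInSlice {n : ℕ} (Ω : Set (Fin n → ℍ[ℝ])) (I : ℍ[ℝ]) (γ : PathC n) : Prop :=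
  ∀ t, psi I (γ t) ∈ Ω

/-- `𝕊(Ω, γ) = {I ∈ 𝕊 : γ^I ⊂ Ω}`. -/
def SGamma {n : ℕ} (Ω : Set (Fin n → ℍ[ℝ])) (γ : PathC n) : Set ℍ[ℝ] :=
  {I | I ∈ SQ ∧ pathInSlice Ω I γ}

/-- `γ ∈ 𝒫(ℂⁿ, Ω)`. -/
def PathIn {n : ℕ} (Ω : Set (Fin n → ℍ[ℝ])) (γ : PathC n) : Prop :=
  IsPathP γ ∧ ∃ I, I ∈ SGamma Ω γ

/-- `F` is a path-slice stem function of `f` on `Ω`. -/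
def IsStem {n : ℕ} (Ω : Set (Fin n → ℍ[ℝ])) (f : (Fin n → ℍ[ℝ]) → ℍ[ℝ])
    (F : PathC n → ℍ[ℝ] × ℍ[ℝ]) : Prop :=
  ∀ γ, PathIn Ω γ → ∀ I ∈ SGamma Ω γ, f (psi I (γ 1)) = (F γ).1 + I * (F γ).2

/-- `f` is a path-slice function on `Ω`. -/
def PathSlice {n : ℕ} (Ω : Set (Fin n → ℍ[ℝ])) (f : (Fin n → ℍ[ℝ]) → ℍ[ℝ]) : Prop :=
  ∃ F, IsStem Ω f F

/-- `Ω` is real-path-connected. -/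
def RealPathConnected {n : ℕ} (Ω : Set (Fin n → ℍ[ℝ])) : Prop :=
  ∀ q ∈ Ω, ∃ γ : PathC n, PathIn Ω γ ∧ ∃ I ∈ SGamma Ω γ, psi I (γ 1) = q

/-- `Ω₂` is `Ω₁`-stem-preserving. -/
def StemPreserving {n : ℕ} (Ω₁ Ω₂ : Set (Fin n → ℍ[ℝ])) : Prop :=
  (∀ γ : PathC n, PathIn Ω₁ γ → (SGamma Ω₂ γ).Nontrivial) ∧
  (∀ α β : PathC n, PathIn Ω₁ α → PathIn Ω₁ β → α 1 = β 1 →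
    ¬ ∃ I, SGamma Ω₂ α ∩ SGamma Ω₂ β = {I})

/-- `Ω` is self-stem-preserving. -/
def SelfStemPreserving {n : ℕ} (Ω : Set (Fin n → ℍ[ℝ])) : Prop :=
  RealPathConnected Ω ∧ StemPreserving Ω Ω

/-- The map `𝕴 : ℍ_sⁿ → 𝕊 ∪ {0}`. -/
def frakI {n : ℕ} (q : Fin n → ℍ[ℝ]) : ℍ[ℝ] :=
  if h : ∀ k, IsRealQ (q k) then 0
  else
    let k := (Finset.univ.filter fun k => ¬ IsRealQ (q k)).min' (by
      push_neg at h
      obtain ⟨k, hk⟩ := h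
      exact ⟨k, Finset.mem_filter.mpr ⟨Finset.mem_univ k, hk⟩⟩)
    ‖q k - ((q k).re : ℍ[ℝ])‖⁻¹ • (q k - ((q k).re : ℍ[ℝ]))

/-- A choice of path-slice stem function of `f` (on paths in `Ω`); by
the results of Dou–Jin–Ren–Yang its restriction to `𝒫(ℂⁿ, Ω₁)` is the canonical `F^f_{Ω₁}`. -/
def stemOf {n : ℕ} (Ω : Set (Fin n → ℍ[ℝ])) (f : (Fin n → ℍ[ℝ]) → ℍ[ℝ]) :
    PathC n → ℍ[ℝ] × ℍ[ℝ] :=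
  Classical.epsilon (IsStem Ω f)

/-- The function `ℱ^f_{Ω₁} : Ω₁ → ℍ²` induced by the stem of `f` (path-slice on `Ω₂`). -/
def scrF {n : ℕ} (Ω₁ Ω₂ : Set (Fin n → ℍ[ℝ])) (f : (Fin n → ℍ[ℝ]) → ℍ[ℝ])
    (q : Fin n → ℍ[ℝ]) : ℍ[ℝ] × ℍ[ℝ] :=
  if ∀ k, IsRealQ (q k) then (f q, 0)
  else stemOf Ω₂ f (Classical.epsilon (fun γ : PathC n =>
    PathIn Ω₁ γ ∧ pathInSlice Ω₁ (frakI q) γ ∧ psi (frakI q) (γ 1) = q))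

/-- The `Ω₁`-slice conjugation `f^c_{Ω₁}`. -/
def sliceConj {n : ℕ} (Ω₁ Ω₂ : Set (Fin n → ℍ[ℝ])) (f : (Fin n → ℍ[ℝ]) → ℍ[ℝ]) :
    (Fin n → ℍ[ℝ]) → ℍ[ℝ] :=
  fun q => star (scrF Ω₁ Ω₂ f q).1 + frakI q * star (scrF Ω₁ Ω₂ f q).2

/-- The `*`-product `g * f` of a path-slice `g : Ω₁ → ℍ` with `f : Ω₂ → ℍ`. -/
def starProdF {n : ℕ} (Ω₁ Ω₂ : Set (Fin n → ℍ[ℝ])) (g f : (Fin n → ℍ[ℝ]) → ℍ[ℝ]) :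
    (Fin n → ℍ[ℝ]) → ℍ[ℝ] :=
  fun q => g q * (scrF Ω₁ Ω₂ f q).1 + frakI q * g q * (scrF Ω₁ Ω₂ f q).2

/-- The symmetrization `f^s_{Ω₁} = f^c_{Ω₁} * f`. -/
def symmF {n : ℕ} (Ω₁ Ω₂ : Set (Fin n → ℍ[ℝ])) (f : (Fin n → ℍ[ℝ]) → ℍ[ℝ]) :
    (Fin n → ℍ[ℝ]) → ℍ[ℝ] :=
  starProdF Ω₁ Ω₂ (sliceConj Ω₁ Ω₂ f) f

/-- The pointwise `*`-product on `ℍ²`. -/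
def starPair (p q : ℍ[ℝ] × ℍ[ℝ]) : ℍ[ℝ] × ℍ[ℝ] :=
  (p.1 * q.1 - p.2 * q.2, p.2 * q.1 + p.1 * q.2)

/-- Slice-open sets: every slice is open (pulled back to `ℂⁿ` via `Ψ_i^I`). -/
def SliceOpen {n : ℕ} (U : Set (Fin n → ℍ[ℝ])) : Prop :=
  ∀ I ∈ SQ, IsOpen {z : Fin n → ℂ | psi I z ∈ U}

/-- Weakly slice regular functions: each slice restriction is left `I`-holomorphic. -/
def SliceRegular {n : ℕ} (Ω : Set (Fin n → ℍ[ℝ])) (f : (Fin n → ℍ[ℝ]) → ℍ[ℝ]) : Prop :=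
  ∀ I ∈ SQ, ∀ z : Fin n → ℂ, psi I z ∈ Ω →
    DifferentiableWithinAt ℝ (fun w => f (psi I w)) {w | psi I w ∈ Ω} z ∧
    ∀ ℓ : Fin n,
      fderivWithin ℝ (fun w => f (psi I w)) {w | psi I w ∈ Ω} z (Pi.single ℓ 1)
        + I * fderivWithin ℝ (fun w => f (psi I w)) {w | psi I w ∈ Ω} z (Pi.single ℓ Complex.I)
        = 0

/-- The ball `B_I(q, r)` inside the slice `ℂ_Iⁿ`. -/
def BI {n : ℕ} (I : ℍ[ℝ]) (q : Fin n → ℍ[ℝ]) (r : ℝ) : Set (Fin n → ℍ[ℝ]) :=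
  {p | p ∈ Set.range (psi (n := n) I) ∧ dist p q < r}

/-- The slice topology. -/
def sliceTop (n : ℕ) : TopologicalSpace (Fin n → ℍ[ℝ]) where
  IsOpen := SliceOpen
  isOpen_univ := by intro I _; simpa using isOpen_univ
  isOpen_inter := by
    intro s t hs ht I hI
    have h : {z : Fin n → ℂ | psi I z ∈ s ∩ t}
        = {z : Fin n → ℂ | psi I z ∈ s} ∩ {z : Fin n → ℂ | psi I z ∈ t} := by
      ext z; simp [Set.mem_inter_iff]
    rw [h]
    exact (hs I hI).inter (ht I hI)
  isOpen_sUnion := by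
    intro S hS I hI
    have h : {z : Fin n → ℂ | psi I z ∈ ⋃₀ S} = ⋃ s ∈ S, {z : Fin n → ℂ | psi I z ∈ s} := by
      ext z; simp
    rw [h]
    exact isOpen_biUnion fun s hs => hS s hs I hI

/-- Slice-domains: nonempty slice-open sets connected in the slice topology. -/
def SliceDomain {n : ℕ} (Ω : Set (Fin n → ℍ[ℝ])) : Prop :=
  SliceOpen Ω ∧ @IsConnected _ (sliceTop n) Ω

/-- Concatenation `γ · ℒ_{γ(1)}^z` of a path with the segment from `γ(1)` to `z`. -/
def concatSeg {n : ℕ} (γ : PathC n) (z : Fin n → ℂ) : PathC n := fun t =>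
  if h : (t : ℝ) ≤ 1 / 2 then
    γ ⟨2 * (t : ℝ), ⟨by linarith [t.2.1], by linarith⟩⟩
  else
    (1 - (2 * (t : ℝ) - 1)) • γ 1 + (2 * (t : ℝ) - 1) • z

/-- The action of `σ` on `ℍ²`: `σ(p₁, p₂) = (-p₂, p₁)`. -/
def sigmaAct (p : ℍ[ℝ] × ℍ[ℝ]) : ℍ[ℝ] × ℍ[ℝ] := (-p.2, p.1)

/-- `F : 𝒫(ℂⁿ, Ω) → ℍ²` is holomorphic at the path `γ`. -/
def StemHoloAt {n : ℕ} (Ω : Set (Fin n → ℍ[ℝ])) (F : PathC n → ℍ[ℝ] × ℍ[ℝ])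
    (γ : PathC n) : Prop :=
  ∃ r > 0, (∀ z ∈ Metric.ball (γ 1) r, PathIn Ω (concatSeg γ z)) ∧
    ∀ z ∈ Metric.ball (γ 1) r,
      DifferentiableAt ℝ (fun w => F (concatSeg γ w)) z ∧
      ∀ ℓ : Fin n,
        fderiv ℝ (fun w => F (concatSeg γ w)) z (Pi.single ℓ 1)
          + sigmaAct (fderiv ℝ (fun w => F (concatSeg γ w)) z (Pi.single ℓ Complex.I)) = 0

/-- `F` is holomorphic (at every path of `𝒫(ℂⁿ, Ω)`). -/
def StemHolo {n : ℕ} (Ω : Set (Fin n → ℍ[ℝ])) (F : PathC n → ℍ[ℝ] × ℍ[ℝ]) : Prop :=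
  ∀ γ, PathIn Ω γ → StemHoloAt Ω F γ

/-- `E` is a complex-analytic subset of the open set `U ⊂ ℂⁿ`. -/
def IsComplexAnalyticSubset {n : ℕ} (U E : Set (Fin n → ℂ)) : Prop :=
  E ⊆ U ∧ ∀ z ∈ U, ∃ V, V ⊆ U ∧ IsOpen V ∧ z ∈ V ∧
    ∃ (m : ℕ) (h : Fin m → (Fin n → ℂ) → ℂ),
      (∀ j, DifferentiableOn ℂ (h j) V) ∧ E ∩ V = {w | w ∈ V ∧ ∀ j, h j w = 0}

/-- `A` is a path-slice analytic subset of the slice-domain `Ω`. -/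
def PathSliceAnalytic {n : ℕ} (Ω A : Set (Fin n → ℍ[ℝ])) : Prop :=
  A = Ω ∨ ∀ γ : PathC n, PathIn Ω γ →
    ∃ r > 0, ∃ rI : ℍ[ℝ] → ℝ, (∀ I ∈ SGamma Ω γ, rI I ∈ Set.Ioc (0 : ℝ) r) ∧
      ∃ E : Set (Fin n → ℂ), IsComplexAnalyticSubset (Metric.ball (γ 1) r) E ∧
        E ≠ Metric.ball (γ 1) r ∧
        ∀ I ∈ SGamma Ω γ, A ∩ BI I (psi I (γ 1)) (rI I) ⊆ psi I '' E




namespace ZS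
open Metric Set






lemma sq_re {I : ℍ[ℝ]} (hI : I ∈ SQ) : I.re = 0 := by
  have h : I * I = -1 := by rw [← pow_two]; exact hI
  have hre : I.re * I.re - I.imI * I.imI - I.imJ * I.imJ - I.imK * I.imK = -1 := by
    have := congrArg QuaternionAlgebra.re h
    simpa [Quaternion.re_mul] using this
  have hi : I.re * I.imI + I.imI * I.re + I.imJ * I.imK - I.imK * I.imJ = 0 := by
    have := congrArg QuaternionAlgebra.imI h
    simpa [Quaternion.imI_mul] using this
  have hj : I.re * I.imJ - I.imI * I.imK + I.imJ * I.re + I.imK * I.imI = 0 := by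
    have := congrArg QuaternionAlgebra.imJ h
    simpa [Quaternion.imJ_mul] using this
  have hk : I.re * I.imK + I.imI * I.imJ - I.imJ * I.imI + I.imK * I.re = 0 := by
    have := congrArg QuaternionAlgebra.imK h
    simpa [Quaternion.imK_mul] using this
  by_contra hre0
  have h1 : I.imI = 0 := by
    have h' : I.re * I.imI = 0 := by linarith
    exact (mul_eq_zero.mp h').resolve_left hre0
  have h2 : I.imJ = 0 := by
    have h' : I.re * I.imJ = 0 := by linarith
    exact (mul_eq_zero.mp h').resolve_left hre0
  have h3 : I.imK = 0 := by
    have h' : I.re * I.imK = 0 := by linarith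
    exact (mul_eq_zero.mp h').resolve_left hre0
  nlinarith [sq_nonneg I.re]

lemma sq_normSq {I : ℍ[ℝ]} (hI : I ∈ SQ) : Quaternion.normSq I = 1 := by
  have h : I * I = -1 := by rw [← pow_two]; exact hI
  have h0 := sq_re hI
  have hre : I.re * I.re - I.imI * I.imI - I.imJ * I.imJ - I.imK * I.imK = -1 := by
    have := congrArg QuaternionAlgebra.re h
    simpa [Quaternion.re_mul] using this
  rw [Quaternion.normSq_def']
  nlinarith

lemma sq_star {I : ℍ[ℝ]} (hI : I ∈ SQ) : star I = -I := by
  ext <;> simp [Quaternion.re_star, sq_re hI]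

lemma sq_mul_self {I : ℍ[ℝ]} (hI : I ∈ SQ) : I * I = -1 := by
  rw [← pow_two]; exact hI

lemma sq_ne_zero {I : ℍ[ℝ]} (hI : I ∈ SQ) : I ≠ 0 := by
  intro h
  have := sq_normSq hI
  rw [h] at this; simp at this

lemma sq_norm {I : ℍ[ℝ]} (hI : I ∈ SQ) : ‖I‖ = 1 := by
  have h := sq_normSq hI
  rw [Quaternion.normSq_eq_norm_mul_self] at h
  nlinarith [norm_nonneg I]

-- re(ab) = re(ba)
lemma re_mul_comm (a b : ℍ[ℝ]) : (a * b).re = (b * a).re := by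
  simp [Quaternion.re_mul]; ring

-- re(star a * b) = re(star b * a)
lemma re_star_mul_comm (a b : ℍ[ℝ]) : (star a * b).re = (star b * a).re := by
  simp [Quaternion.re_mul, Quaternion.re_star, Quaternion.imI_star, Quaternion.imJ_star,
    Quaternion.imK_star]; ring

lemma smul_unit_eq {I J : ℍ[ℝ]} (hI : I ∈ SQ) (hJ : J ∈ SQ) {t : ℝ}
    (h : t • I = J) : t = 1 ∨ t = -1 := by
  have h1 : Quaternion.normSq (t • I) = 1 := by rw [h]; exact sq_normSq hJ
  have h2 : t^2 * Quaternion.normSq I = 1 := by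
    rw [← h1, Quaternion.normSq_def', Quaternion.normSq_def']
    simp [Quaternion.re_smul, Quaternion.imI_smul, Quaternion.imJ_smul, Quaternion.imK_smul,
      smul_eq_mul]
    ring
  rw [sq_normSq hI, mul_one] at h2
  exact sq_eq_one_iff.mp h2




lemma psi_real {n : ℕ} (I : ℍ[ℝ]) {z : Fin n → ℂ} (hz : ∀ k, (z k).im = 0) :
    psi I z = fun k => ((z k).re : ℍ[ℝ]) := by
  funext k; simp [psi, hz k]

lemma norm_coe_add_smul {I : ℍ[ℝ]} (hI : I ∈ SQ) (x y : ℝ) :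
    ‖(x : ℍ[ℝ]) + y • I‖ = ‖(⟨x, y⟩ : ℂ)‖ := by
  have h1 : ‖(x : ℍ[ℝ]) + y • I‖ * ‖(x : ℍ[ℝ]) + y • I‖ = x^2 + y^2 := by
    rw [← Quaternion.normSq_eq_norm_mul_self, Quaternion.normSq_def']
    have h0 := sq_re hI
    have hn := sq_normSq hI
    rw [Quaternion.normSq_def'] at hn
    simp [Quaternion.re_add, Quaternion.imI_add, Quaternion.imJ_add, Quaternion.imK_add,
      Quaternion.re_smul, Quaternion.imI_smul, Quaternion.imJ_smul, Quaternion.imK_smul,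
      Quaternion.re_coe, Quaternion.imI_coe, Quaternion.imJ_coe, Quaternion.imK_coe,
      smul_eq_mul, h0]
    have h3 : I.imI^2 + I.imJ^2 + I.imK^2 = 1 := by rw [h0] at hn; nlinarith
    linear_combination (y^2) * h3
  have h2 : ‖(⟨x, y⟩ : ℂ)‖ * ‖(⟨x, y⟩ : ℂ)‖ = x^2 + y^2 := by
    rw [← pow_two, Complex.sq_norm, Complex.normSq_mk]
    ring
  nlinarith [norm_nonneg ((x : ℍ[ℝ]) + y • I), norm_nonneg (⟨x, y⟩ : ℂ)]

lemma dist_psi_coord {I : ℍ[ℝ]} (hI : I ∈ SQ) (a b : ℂ) :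
    dist (((a.re : ℍ[ℝ]) + a.im • I)) (((b.re : ℍ[ℝ]) + b.im • I)) = dist a b := by
  rw [dist_eq_norm, dist_eq_norm]
  have h : ((a.re : ℍ[ℝ]) + a.im • I) - ((b.re : ℍ[ℝ]) + b.im • I)
      = ((a.re - b.re : ℝ) : ℍ[ℝ]) + (a.im - b.im) • I := by
    push_cast; module
  rw [h, norm_coe_add_smul hI]
  have h2 : (⟨a.re - b.re, a.im - b.im⟩ : ℂ) = a - b := by
    apply Complex.ext <;> simp
  rw [h2]

lemma dist_psi {n : ℕ} {I : ℍ[ℝ]} (hI : I ∈ SQ) (z w : Fin n → ℂ) :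
    dist (psi I z) (psi I w) = dist z w := by
  apply le_antisymm
  · apply (dist_pi_le_iff dist_nonneg).2
    intro k
    rw [show psi I z k = ((z k).re : ℍ[ℝ]) + (z k).im • I from rfl,
      show psi I w k = ((w k).re : ℍ[ℝ]) + (w k).im • I from rfl, dist_psi_coord hI]
    exact dist_le_pi_dist z w k
  · apply (dist_pi_le_iff dist_nonneg).2
    intro k
    rw [← dist_psi_coord hI (z k) (w k)]
    exact dist_le_pi_dist (psi I z) (psi I w) k

-- coordinates of psi equality
lemma psi_eq_coord {I J : ℍ[ℝ]} (hI : I ∈ SQ) (hJ : J ∈ SQ) {a b : ℂ}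
    (h : (a.re : ℍ[ℝ]) + a.im • I = (b.re : ℍ[ℝ]) + b.im • J) :
    a.re = b.re ∧ a.im • I = b.im • J := by
  have hre : a.re = b.re := by
    have := congrArg QuaternionAlgebra.re h
    simpa [Quaternion.re_smul, sq_re hI, sq_re hJ] using this
  refine ⟨hre, ?_⟩
  have := h
  rw [hre] at this
  exact add_left_cancel this

lemma psi_eq_real {n : ℕ} {I J : ℍ[ℝ]} (hI : I ∈ SQ) (hJ : J ∈ SQ) {z u : Fin n → ℂ}
    (hz : ∀ k, (z k).im = 0) (h : psi J u = psi I z) : u = z := by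
  funext k
  have hk := psi_eq_coord hJ hI (congrFun h k)
  have him : (u k).im = 0 := by
    have h2 : (u k).im • J = 0 := by rw [hk.2, hz k, zero_smul]
    rcases smul_eq_zero.mp h2 with h3 | h3
    · exact h3
    · exact absurd h3 (sq_ne_zero hJ)
  apply Complex.ext
  · exact hk.1
  · rw [him, hz k]

-- nonreal coordinate forces J = ±I
lemma psi_eq_nonreal {n : ℕ} {I J : ℍ[ℝ]} (hI : I ∈ SQ) (hJ : J ∈ SQ) {z u : Fin n → ℂ}
    {k₀ : Fin n} (hk₀ : (z k₀).im ≠ 0) (h : psi J u = psi I z) :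
    (J = I ∧ u = z) ∨ (J = -I ∧ u = fun k => (starRingEnd ℂ) (z k)) := by
  have hk := psi_eq_coord hJ hI (congrFun h k₀)
  have hu0 : (u k₀).im ≠ 0 := by
    intro h0
    rw [h0, zero_smul] at hk
    exact hk₀ (by
      rcases smul_eq_zero.mp hk.2.symm with h3 | h3
      · exact h3
      · exact absurd h3 (sq_ne_zero hI))
  have hJI : ((z k₀).im / (u k₀).im) • I = J := by
    rw [div_eq_inv_mul, mul_smul, ← hk.2, ← mul_smul, inv_mul_cancel₀ hu0, one_smul]
  rcases smul_unit_eq hI hJ hJI with h1 | h1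
  · left
    have hJeq : J = I := by rw [← hJI, h1, one_smul]
    refine ⟨hJeq, ?_⟩
    funext k
    have hk' := psi_eq_coord hJ hI (congrFun h k)
    apply Complex.ext
    · exact hk'.1
    · have h6 := hk'.2
      rw [hJeq] at h6
      have h5 : ((u k).im - (z k).im) • I = 0 := by rw [sub_smul, h6, sub_self]
      rcases smul_eq_zero.mp h5 with h7 | h7
      · linarith
      · exact absurd h7 (sq_ne_zero hI)
  · right
    have hJeq : J = -I := by rw [← hJI, h1, neg_one_smul]
    refine ⟨hJeq, ?_⟩
    funext k
    have hk' := psi_eq_coord hJ hI (congrFun h k)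
    apply Complex.ext
    · simpa using hk'.1
    · have h6 := hk'.2
      rw [hJeq, smul_neg, ← neg_smul] at h6
      have h5 : (-(u k).im - (z k).im) • I = 0 := by rw [sub_smul, h6, sub_self]
      rcases smul_eq_zero.mp h5 with h7 | h7
      · simp only [Complex.conj_im]
        linarith
      · exact absurd h7 (sq_ne_zero hI)





-- promote real differentiability with CR identity to complex differentiability
lemma differentiableAt_complex_of_cr {E F : Type*}
    [NormedAddCommGroup E] [NormedSpace ℂ E]
    [NormedAddCommGroup F] [NormedSpace ℂ F]
    {f : E → F} {z : E} (D : E →L[ℝ] F) (hD : HasFDerivAt f D z)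
    (hCR : ∀ v, D (Complex.I • v) = Complex.I • D v) : DifferentiableAt ℂ f z := by
  have hsmul : ∀ (c : ℂ) (v : E), D (c • v) = c • D v := by
    intro c v
    have hv : c • v = c.re • v + c.im • (Complex.I • v) := by
      have h1 : c = (c.re : ℂ) + (c.im : ℂ) * Complex.I := (Complex.re_add_im c).symm
      calc c • v = ((c.re : ℂ) + (c.im : ℂ) * Complex.I) • v := by rw [← h1]
        _ = (c.re : ℂ) • v + ((c.im : ℂ) * Complex.I) • v := by rw [add_smul]
        _ = c.re • v + c.im • (Complex.I • v) := by
            rw [mul_smul]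
            norm_cast
    have hw : c • D v = c.re • D v + c.im • (Complex.I • D v) := by
      have h1 : c = (c.re : ℂ) + (c.im : ℂ) * Complex.I := (Complex.re_add_im c).symm
      calc c • D v = ((c.re : ℂ) + (c.im : ℂ) * Complex.I) • D v := by rw [← h1]
        _ = (c.re : ℂ) • D v + ((c.im : ℂ) * Complex.I) • D v := by rw [add_smul]
        _ = c.re • D v + c.im • (Complex.I • D v) := by
            rw [mul_smul]
            norm_cast
    rw [hv, map_add, D.map_smul, D.map_smul, hCR, hw]
  set M' : E →L[ℂ] F :=
    { toFun := D
      map_add' := fun a b => D.map_add a b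
      map_smul' := fun c v => hsmul c v
      cont := D.cont } with hM'
  refine ⟨M', ?_⟩
  have h1 := hasFDerivAt_iff_isLittleO_nhds_zero.mp hD
  have h2 : HasFDerivAt f M' z := by
    rw [hasFDerivAt_iff_isLittleO_nhds_zero]
    have hco : (⇑M' : E → F) = ⇑D := rfl
    rw [hco]
    exact h1
  exact h2

def theta (K c p : ℍ[ℝ]) : ℂ := ⟨(star c * p).re, -(star c * (K * p)).re⟩

def thetaL (K c : ℍ[ℝ]) : ℍ[ℝ] →ₗ[ℝ] ℂ where
  toFun := theta K c
  map_add' p q := by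
    apply Complex.ext <;>
      simp [theta, mul_add, Quaternion.re_add] <;> ring
  map_smul' r p := by
    apply Complex.ext <;>
      simp [theta, Complex.real_smul, mul_smul_comm, Quaternion.re_smul, smul_eq_mul] <;> ring

def thetaCLM (K c : ℍ[ℝ]) : ℍ[ℝ] →L[ℝ] ℂ := LinearMap.toContinuousLinearMap (thetaL K c)

lemma theta_K_mul {K : ℍ[ℝ]} (hK : K * K = -1) (c p : ℍ[ℝ]) :
    theta K c (K * p) = Complex.I * theta K c p := by
  apply Complex.ext <;>
    simp [theta, ← mul_assoc, hK] <;> ring_nf <;>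
    simp [mul_assoc, hK]

def basisq : Fin 4 → ℍ[ℝ] :=
  ![1, ⟨0,1,0,0⟩, ⟨0,0,1,0⟩, ⟨0,0,0,1⟩]

lemma theta_basis_zero {K : ℍ[ℝ]} {p : ℍ[ℝ]} (h : ∀ j, theta K (basisq j) p = 0) :
    p = 0 := by
  have h0 := congrArg Complex.re (h 0)
  have h1 := congrArg Complex.re (h 1)
  have h2 := congrArg Complex.re (h 2)
  have h3 := congrArg Complex.re (h 3)
  simp [theta, basisq, Quaternion.re_mul, Quaternion.re_star, Quaternion.imI_star,
    Quaternion.imJ_star, Quaternion.imK_star] at h0 h1 h2 h3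
  simp [Star.star, Quaternion.instStar._aux_1] at h1 h2 h3
  ext <;> simp <;> linarith





variable {n : ℕ} {E : Type*} [NormedAddCommGroup E] [NormedSpace ℂ E] [CompleteSpace E]

-- L1: spreading along lines in a ball
lemma spread_ball {z₀ : Fin n → ℂ} {ρ ε : ℝ} (hε : 0 < ε) (hερ : ε ≤ ρ)
    {f : (Fin n → ℂ) → E} (hd : DifferentiableOn ℂ f (ball z₀ ρ))
    (h0 : EqOn f 0 (ball z₀ ε)) : EqOn f 0 (ball z₀ ρ) := by
  intro p hp
  rcases eq_or_ne p z₀ with rfl | hne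
  · exact h0 (mem_ball_self hε)
  have hρ : 0 < ρ := lt_of_lt_of_le hε hερ
  set v : Fin n → ℂ := p - z₀ with hv
  have hvne : v ≠ 0 := sub_ne_zero.mpr hne
  have hvnorm : 0 < ‖v‖ := norm_pos_iff.mpr hvne
  have hvlt : ‖v‖ < ρ := by
    have := mem_ball_iff_norm.mp hp
    simpa [hv] using this
  set φ : ℂ → E := fun τ => f (z₀ + τ • v) with hφ
  set D : Set ℂ := ball (0 : ℂ) (ρ / ‖v‖) with hD
  have hline : ∀ τ : ℂ, τ ∈ D → z₀ + τ • v ∈ ball z₀ ρ := by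
    intro τ hτ
    rw [mem_ball_iff_norm]
    have : ‖τ • v‖ = ‖τ‖ * ‖v‖ := norm_smul τ v
    rw [add_sub_cancel_left, this]
    have hτ' : ‖τ‖ < ρ / ‖v‖ := by simpa [hD] using hτ
    calc ‖τ‖ * ‖v‖ < (ρ / ‖v‖) * ‖v‖ := by
          exact mul_lt_mul_of_pos_right hτ' hvnorm
      _ = ρ := by field_simp
  have hφd : DifferentiableOn ℂ φ D := by
    intro τ hτ
    have h1 : DifferentiableAt ℂ (fun τ : ℂ => z₀ + τ • v) τ :=
      (differentiableAt_id.smul_const v).const_add z₀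
    exact ((hd _ (hline τ hτ)).differentiableAt
      (isOpen_ball.mem_nhds (hline τ hτ))).comp τ h1 |>.differentiableWithinAt
  have hφan : AnalyticOnNhd ℂ φ D := hφd.analyticOnNhd isOpen_ball
  have hfreq : ∃ᶠ τ in nhdsWithin (0 : ℂ) {(0:ℂ)}ᶜ, φ τ = 0 := by
    rw [Filter.frequently_iff]
    intro s hs
    rw [Metric.mem_nhdsWithin_iff] at hs
    obtain ⟨δ, hδ, hsub⟩ := hs
    set τ : ℂ := ((min δ (ε / ‖v‖) / 2 : ℝ) : ℂ) with hτdef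
    have hmin : 0 < min δ (ε / ‖v‖) := lt_min hδ (div_pos hε hvnorm)
    have hτnorm : ‖τ‖ = min δ (ε / ‖v‖) / 2 := by
      rw [hτdef, Complex.norm_real, Real.norm_eq_abs, abs_of_pos (by linarith)]
    refine ⟨τ, hsub ⟨?_, ?_⟩, ?_⟩
    · rw [mem_ball_iff_norm, sub_zero, hτnorm]
      calc min δ (ε / ‖v‖) / 2 < min δ (ε / ‖v‖) := by linarith
        _ ≤ δ := min_le_left _ _
    · simp only [mem_compl_iff, mem_singleton_iff]
      intro h
      rw [h] at hτnorm
      simp at hτnorm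
      linarith
    · apply h0
      rw [mem_ball_iff_norm, add_sub_cancel_left, norm_smul, hτnorm]
      calc min δ (ε / ‖v‖) / 2 * ‖v‖ < (ε / ‖v‖) * ‖v‖ := by
            apply mul_lt_mul_of_pos_right _ hvnorm
            calc min δ (ε / ‖v‖) / 2 < min δ (ε / ‖v‖) := by linarith
              _ ≤ ε / ‖v‖ := min_le_right _ _
        _ = ε := by field_simp
  have hconn : IsPreconnected D := (convex_ball (0:ℂ) _).isPreconnected
  have h0D : (0 : ℂ) ∈ D := by
    exact mem_ball_self (div_pos hρ hvnorm)
  have := hφan.eqOn_zero_of_preconnected_of_frequently_eq_zero hconn h0D hfreq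
  have h1D : (1 : ℂ) ∈ D := by
    rw [hD, mem_ball_iff_norm, sub_zero]
    simp only [norm_one]
    rw [lt_div_iff₀ hvnorm, one_mul]
    exact hvlt
  have := this h1D
  simpa [hφ, hv] using this



variable {n : ℕ} {E : Type*} [NormedAddCommGroup E] [NormedSpace ℂ E] [CompleteSpace E]

-- L2: spreading from real points
lemma spread_real {x₀ : Fin n → ℂ} {ρ : ℝ} (hρ : 0 < ρ) (hx₀ : ∀ k, (x₀ k).im = 0)
    {f : (Fin n → ℂ) → E} (hd : DifferentiableOn ℂ f (ball x₀ ρ))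
    (h0 : ∀ x ∈ ball x₀ ρ, (∀ k, (x k).im = 0) → f x = 0) : EqOn f 0 (ball x₀ ρ) := by
  have key : ∀ m : ℕ, ∀ z ∈ ball x₀ ρ, (∀ k : Fin n, m ≤ (k : ℕ) → (z k).im = 0) → f z = 0 := by
    intro m
    induction m with
    | zero => exact fun z hz h => h0 z hz (fun k => h k (Nat.zero_le _))
    | succ m ih =>
      intro z hz h
      by_cases hm : m < n
      · set ℓ : Fin n := ⟨m, hm⟩ with hℓ
        set φ : ℂ → E := fun τ => f (Function.update z ℓ τ) with hφ
        set D : Set ℂ := ball (x₀ ℓ) ρ with hD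
        have hupd : ∀ τ ∈ D, Function.update z ℓ τ ∈ ball x₀ ρ := by
          intro τ hτ
          rw [mem_ball] at hτ ⊢
          rw [dist_pi_lt_iff hρ]
          intro k
          by_cases hk : k = ℓ
          · subst hk; simpa using hτ
          · rw [Function.update_of_ne hk]
            exact lt_of_le_of_lt (dist_le_pi_dist z x₀ k) hz
        have hupd_eq : ∀ τ : ℂ, Function.update z ℓ τ = z + (τ - z ℓ) • (Pi.single ℓ 1 : Fin n → ℂ) := by
          intro τ
          funext k
          by_cases hk : k = ℓ
          · subst hk; simp
          · simp [Function.update_of_ne hk, Pi.single_eq_of_ne hk]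
        have hφd : DifferentiableOn ℂ φ D := by
          intro τ hτ
          have h1 : DifferentiableAt ℂ (fun τ : ℂ => z + (τ - z ℓ) • (Pi.single ℓ 1 : Fin n → ℂ)) τ := by
            apply DifferentiableAt.const_add
            exact (differentiableAt_id.sub_const (z ℓ)).smul_const _
          have h2 : DifferentiableAt ℂ φ τ := by
            have h3 := ((hd _ (hupd τ hτ)).differentiableAt
              (isOpen_ball.mem_nhds (hupd τ hτ)))
            have h4 : φ = (fun w => f w) ∘ (fun τ : ℂ => z + (τ - z ℓ) • (Pi.single ℓ 1 : Fin n → ℂ)) := by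
              funext σ
              simp only [hφ, Function.comp_apply, hupd_eq]
            rw [h4]
            rw [hupd_eq τ] at h3
            exact h3.comp τ h1
          exact h2.differentiableWithinAt
        have hφan : AnalyticOnNhd ℂ φ D := hφd.analyticOnNhd isOpen_ball
        have hfreq : ∃ᶠ τ in nhdsWithin (x₀ ℓ) {(x₀ ℓ)}ᶜ, φ τ = 0 := by
          rw [Filter.frequently_iff]
          intro s hs
          rw [Metric.mem_nhdsWithin_iff] at hs
          obtain ⟨δ, hδ, hsub⟩ := hs
          have hmin : 0 < min δ ρ := lt_min hδ hρ
          set τ : ℂ := x₀ ℓ + ((min δ ρ / 2 : ℝ) : ℂ) with hτdef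
          have hdist : dist τ (x₀ ℓ) = min δ ρ / 2 := by
            rw [hτdef, dist_eq_norm, add_sub_cancel_left, Complex.norm_real,
              Real.norm_eq_abs, abs_of_pos (by linarith)]
          refine ⟨τ, hsub ⟨?_, ?_⟩, ?_⟩
          · rw [mem_ball, hdist]
            calc min δ ρ / 2 < min δ ρ := by linarith
              _ ≤ δ := min_le_left _ _
          · simp only [mem_compl_iff, mem_singleton_iff]
            intro hτx
            rw [hτx] at hdist
            simp at hdist
            linarith
          · have hτD : τ ∈ D := by
              rw [hD, mem_ball, hdist]
              calc min δ ρ / 2 < min δ ρ := by linarith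
                _ ≤ ρ := min_le_right _ _
            apply ih _ (hupd τ hτD)
            intro k hk
            by_cases hkℓ : k = ℓ
            · rw [hkℓ, Function.update_self]
              simp [hτdef, hx₀ ℓ]
            · rw [Function.update_of_ne hkℓ]
              apply h
              rcases Nat.lt_or_ge (m) (k : ℕ) with h' | h'
              · omega
              · exfalso
                have : (k : ℕ) = m := by omega
                exact hkℓ (Fin.ext (by simp [hℓ, this]))
        have heq := hφan.eqOn_zero_of_preconnected_of_frequently_eq_zero
          ((convex_ball (x₀ ℓ) ρ).isPreconnected) (mem_ball_self hρ) hfreq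
        have hzℓ : z ℓ ∈ D := by
          rw [hD, mem_ball]
          exact lt_of_le_of_lt (dist_le_pi_dist z x₀ ℓ) (mem_ball.mp hz)
        have := heq hzℓ
        simpa [hφ, Function.update_eq_self] using this
      · exact ih z hz (fun k hk => absurd (lt_of_lt_of_le k.2 (not_lt.mp hm)) (not_lt.mpr hk))
  intro z hz
  exact key n z hz (fun k hk => absurd k.2 (not_lt.mpr hk))

-- L3: propagation along a path
lemma spread_path {U : Set (Fin n → ℂ)} (hU : IsOpen U)
    {f : (Fin n → ℂ) → E} (hd : DifferentiableOn ℂ f U)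
    (γ : unitInterval → (Fin n → ℂ)) (hγc : Continuous γ) (hγU : ∀ t, γ t ∈ U)
    {t₀ : unitInterval} (h0 : ∃ ε > 0, ball (γ t₀) ε ⊆ U ∧ EqOn f 0 (ball (γ t₀) ε))
    (t₁ : unitInterval) :
    ∃ ε > 0, ball (γ t₁) ε ⊆ U ∧ EqOn f 0 (ball (γ t₁) ε) := by
  set T : Set unitInterval := {t | ∃ ε > 0, ball (γ t) ε ⊆ U ∧ EqOn f 0 (ball (γ t) ε)} with hT
  have hopen : IsOpen T := by
    rw [isOpen_iff_mem_nhds]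
    rintro t ⟨ε, hε, hsub, heq⟩
    have hev : ∀ᶠ s in nhds t, γ s ∈ ball (γ t) (ε / 2) :=
      (hγc.tendsto t).eventually (ball_mem_nhds (γ t) (by linarith))
    apply hev.mono
    intro s hs
    refine ⟨ε / 2, by linarith, ?_, ?_⟩
    · refine (ball_subset_ball' ?_).trans hsub
      rw [mem_ball] at hs
      linarith
    · intro w hw
      apply heq
      rw [mem_ball] at hw hs ⊢
      calc dist w (γ t) ≤ dist w (γ s) + dist (γ s) (γ t) := dist_triangle _ _ _
        _ < ε / 2 + ε / 2 := add_lt_add hw hs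
        _ = ε := by ring
  have hclosed : IsClosed T := by
    rw [← isOpen_compl_iff, isOpen_iff_mem_nhds]
    intro t ht
    obtain ⟨ρ, hρ, hsub⟩ := Metric.isOpen_iff.mp hU (γ t) (hγU t)
    have hev : ∀ᶠ s in nhds t, γ s ∈ ball (γ t) (ρ / 8) :=
      (hγc.tendsto t).eventually (ball_mem_nhds (γ t) (by linarith))
    apply hev.mono
    intro s hs hsT
    apply ht
    obtain ⟨ε, hε, hsubs, heqs⟩ := hsT
    rw [mem_ball] at hs
    -- spread from ball (γ s) small to ball (γ s) (3ρ/4)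
    have hbig : ball (γ s) (3 * ρ / 4) ⊆ ball (γ t) ρ := by
      apply ball_subset_ball'
      linarith
    have hsmall : EqOn f 0 (ball (γ s) (min ε (3 * ρ / 4))) := fun w hw =>
      heqs (ball_subset_ball (min_le_left _ _) hw)
    have hspread := spread_ball (lt_min hε (by linarith)) (min_le_right _ _)
      (hd.mono (hbig.trans hsub)) hsmall
    refine ⟨ρ / 2, by linarith, ?_, ?_⟩
    · exact (ball_subset_ball (by linarith)).trans hsub
    · intro w hw
      apply hspread
      rw [mem_ball] at hw ⊢
      calc dist w (γ s) ≤ dist w (γ t) + dist (γ t) (γ s) := dist_triangle _ _ _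
        _ < ρ / 2 + ρ / 8 := add_lt_add hw (by rw [dist_comm]; linarith)
        _ < 3 * ρ / 4 := by linarith
  have hne : T.Nonempty := ⟨t₀, h0⟩
  have hTuniv := (isClopen_iff.mp ⟨hclosed, hopen⟩).resolve_left (Nonempty.ne_empty hne)
  have ht1 : t₁ ∈ T := by rw [hTuniv]; exact mem_univ t₁
  exact ht1

-- ================= CRH framework =================

variable {n : ℕ}

/-- real differentiability with left `K`-Cauchy-Riemann equations -/
def CRH (U : Set (Fin n → ℂ)) (h : (Fin n → ℂ) → ℍ[ℝ]) (K : ℍ[ℝ]) : Prop :=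
  ∀ z ∈ U, ∃ L : (Fin n → ℂ) →L[ℝ] ℍ[ℝ], HasFDerivAt h L z ∧
    ∀ v, L (Complex.I • v) = K * L v

lemma CRH.mono {U V : Set (Fin n → ℂ)} {h K} (hc : CRH U h K) (hVU : V ⊆ U) :
    CRH V h K := fun z hz => hc z (hVU hz)

lemma CRH.sub {U : Set (Fin n → ℂ)} {h₁ h₂ K} (hc₁ : CRH U h₁ K) (hc₂ : CRH U h₂ K) :
    CRH U (fun z => h₁ z - h₂ z) K := by
  intro z hz
  obtain ⟨L₁, hL₁, hcr₁⟩ := hc₁ z hz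
  obtain ⟨L₂, hL₂, hcr₂⟩ := hc₂ z hz
  refine ⟨L₁ - L₂, hL₁.sub hL₂, fun v => ?_⟩
  simp only [ContinuousLinearMap.sub_apply, hcr₁, hcr₂, mul_sub]

def theta4 (K : ℍ[ℝ]) (p : ℍ[ℝ]) : Fin 4 → ℂ := fun j => thetaCLM K (basisq j) p

lemma theta4_zero_iff {K p} : theta4 K p = 0 ↔ p = 0 := by
  constructor
  · intro h
    apply theta_basis_zero (K := K)
    intro j
    have := congrFun h j
    simpa [theta4, thetaCLM, thetaL] using this
  · intro h
    funext j
    simp [theta4, h]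

lemma crh_diffOn {U : Set (Fin n → ℂ)} {h : (Fin n → ℂ) → ℍ[ℝ]} {K : ℍ[ℝ]}
    (hKK : K * K = -1) (hcr : CRH U h K) :
    DifferentiableOn ℂ (fun z => theta4 K (h z)) U := by
  intro z hz
  obtain ⟨L, hL, hLcr⟩ := hcr z hz
  set Θ : ℍ[ℝ] →L[ℝ] (Fin 4 → ℂ) :=
    ContinuousLinearMap.pi (fun j : Fin 4 => thetaCLM K (basisq j)) with hΘ
  have hD : HasFDerivAt (fun z => theta4 K (h z)) (Θ.comp L) z := by
    have h1 : (fun z => theta4 K (h z)) = (fun p => Θ p) ∘ h := by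
      funext w
      funext j
      rfl
    rw [h1]
    exact (Θ.hasFDerivAt).comp z hL
  have hcr' : ∀ v, (Θ.comp L) (Complex.I • v) = Complex.I • (Θ.comp L) v := by
    intro v
    funext j
    simp only [ContinuousLinearMap.comp_apply, hΘ, ContinuousLinearMap.pi_apply, Pi.smul_apply,
      smul_eq_mul, hLcr]
    have : thetaCLM K (basisq j) (K * L v) = theta K (basisq j) (K * L v) := rfl
    rw [this, theta_K_mul hKK]
    rfl
  exact (differentiableAt_complex_of_cr (Θ.comp L) hD hcr').differentiableWithinAt

lemma crh_vanish_iff {K : ℍ[ℝ]} {h : (Fin n → ℂ) → ℍ[ℝ]} {w : Fin n → ℂ} :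
    theta4 K (h w) = 0 ↔ h w = 0 := theta4_zero_iff

/-- quaternionic version of `spread_ball` -/
lemma crh_spread_ball {U : Set (Fin n → ℂ)} {h K} (hKK : K * K = -1) (hcr : CRH U h K)
    {z₀ : Fin n → ℂ} {ρ ε : ℝ} (hε : 0 < ε) (hερ : ε ≤ ρ) (hsub : ball z₀ ρ ⊆ U)
    (h0 : ∀ w ∈ ball z₀ ε, h w = 0) : ∀ w ∈ ball z₀ ρ, h w = 0 := by
  have hd := (crh_diffOn hKK hcr).mono hsub
  have hsp := spread_ball hε hερ hd (fun w hw => by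
    show theta4 K (h w) = 0
    rw [theta4_zero_iff]
    exact h0 w hw)
  intro w hw
  rw [← theta4_zero_iff (K := K)]
  exact hsp hw

/-- quaternionic version of `spread_real` -/
lemma crh_spread_real {U : Set (Fin n → ℂ)} {h K} (hKK : K * K = -1) (hcr : CRH U h K)
    {x₀ : Fin n → ℂ} {ρ : ℝ} (hρ : 0 < ρ) (hx₀ : ∀ k, (x₀ k).im = 0) (hsub : ball x₀ ρ ⊆ U)
    (h0 : ∀ x ∈ ball x₀ ρ, (∀ k, (x k).im = 0) → h x = 0) : ∀ w ∈ ball x₀ ρ, h w = 0 := by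
  have hd := (crh_diffOn hKK hcr).mono hsub
  have hsp := spread_real hρ hx₀ hd (fun x hx hxre => by
    show theta4 K (h x) = 0
    rw [theta4_zero_iff]
    exact h0 x hx hxre)
  intro w hw
  rw [← theta4_zero_iff (K := K)]
  exact hsp hw

/-- quaternionic version of `spread_path` -/
lemma crh_spread_path {U : Set (Fin n → ℂ)} (hU : IsOpen U) {h K} (hKK : K * K = -1)
    (hcr : CRH U h K) (γ : unitInterval → (Fin n → ℂ)) (hγc : Continuous γ)
    (hγU : ∀ t, γ t ∈ U) {t₀ : unitInterval}
    (h0 : ∃ ε > 0, ball (γ t₀) ε ⊆ U ∧ ∀ w ∈ ball (γ t₀) ε, h w = 0) (t₁ : unitInterval) :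
    ∃ ε > 0, ball (γ t₁) ε ⊆ U ∧ ∀ w ∈ ball (γ t₁) ε, h w = 0 := by
  have hd := crh_diffOn hKK hcr
  obtain ⟨ε, hε, hsub, hvan⟩ := h0
  have hsp := spread_path hU hd γ hγc hγU (t₀ := t₀)
    ⟨ε, hε, hsub, fun w hw => by
      show theta4 K (h w) = 0
      rw [theta4_zero_iff]
      exact hvan w hw⟩ t₁
  obtain ⟨ε₁, hε₁, hsub₁, heq₁⟩ := hsp
  refine ⟨ε₁, hε₁, hsub₁, fun w hw => ?_⟩
  rw [← theta4_zero_iff (K := K)]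
  exact heq₁ hw

/-- extend coordinatewise CR equations to all directions -/
lemma cr_extend {L : (Fin n → ℂ) →L[ℝ] ℍ[ℝ]} {K : ℍ[ℝ]} (hKK : K * K = -1)
    (h : ∀ ℓ, L (Pi.single ℓ 1) + K * L (Pi.single ℓ Complex.I) = 0) :
    ∀ v, L (Complex.I • v) = K * L v := by
  have h1 : ∀ ℓ, L (Pi.single ℓ Complex.I) = K * L (Pi.single ℓ 1) := by
    intro ℓ
    have h2 : L (Pi.single ℓ 1) = -(K * L (Pi.single ℓ Complex.I)) :=
      eq_neg_of_add_eq_zero_left (h ℓ)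
    rw [h2, mul_neg, ← mul_assoc, hKK, neg_one_mul, neg_neg]
  have hv : ∀ w : Fin n → ℂ, L w
      = ∑ ℓ, ((w ℓ).re • L (Pi.single ℓ 1) + (w ℓ).im • L (Pi.single ℓ Complex.I)) := by
    intro w
    have hw : w = ∑ ℓ, ((w ℓ).re • (Pi.single ℓ 1 : Fin n → ℂ)
        + (w ℓ).im • (Pi.single ℓ Complex.I : Fin n → ℂ)) := by
      funext k
      rw [Finset.sum_apply]
      rw [Finset.sum_eq_single k]
      · simp only [Pi.add_apply, Pi.smul_apply, Pi.single_eq_same, Complex.real_smul, mul_one]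
        exact (Complex.re_add_im (w k)).symm
      · intro b _ hb
        simp [Pi.single_apply, Ne.symm hb]
      · intro hk
        exact absurd (Finset.mem_univ k) hk
    calc L w = L (∑ ℓ, ((w ℓ).re • (Pi.single ℓ 1 : Fin n → ℂ)
        + (w ℓ).im • (Pi.single ℓ Complex.I : Fin n → ℂ))) := by rw [← hw]
      _ = _ := by
          rw [map_sum]
          refine Finset.sum_congr rfl (fun ℓ _ => ?_)
          rw [map_add, L.map_smul, L.map_smul]
  intro v
  rw [hv (Complex.I • v), hv v, Finset.mul_sum]
  refine Finset.sum_congr rfl (fun ℓ _ => ?_)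
  have hre : ((Complex.I • v) ℓ).re = -((v ℓ).im) := by simp
  have him : ((Complex.I • v) ℓ).im = (v ℓ).re := by simp
  rw [hre, him, mul_add, mul_smul_comm, mul_smul_comm, h1 ℓ, ← mul_assoc, hKK, neg_one_mul]
  module

-- ================= slice regularity gives CRH =================

lemma sliceReg_crh {Ω : Set (Fin n → ℍ[ℝ])} {f : (Fin n → ℍ[ℝ]) → ℍ[ℝ]}
    (hΩo : SliceOpen Ω) (hf : SliceRegular Ω f) {I : ℍ[ℝ]} (hI : I ∈ SQ) :
    CRH {z | psi I z ∈ Ω} (fun z => f (psi I z)) I := by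
  intro z hz
  have hU : IsOpen {z : Fin n → ℂ | psi I z ∈ Ω} := hΩo I hI
  obtain ⟨hdw, hcr⟩ := hf I hI z hz
  have hda := hdw.differentiableAt (hU.mem_nhds hz)
  refine ⟨fderiv ℝ (fun w => f (psi I w)) z, hda.hasFDerivAt, ?_⟩
  apply cr_extend (sq_mul_self hI)
  intro ℓ
  have h1 := hcr ℓ
  rwa [fderivWithin_of_isOpen hU hz] at h1

-- ================= the local stem =================

variable {Ω : Set (Fin n → ℍ[ℝ])} {f : (Fin n → ℍ[ℝ]) → ℍ[ℝ]}

/-- slice function -/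
def gsl (f : (Fin n → ℍ[ℝ]) → ℍ[ℝ]) (I : ℍ[ℝ]) : (Fin n → ℂ) → ℍ[ℝ] :=
  fun z => f (psi I z)

/-- slice preimage -/
def Usl (Ω : Set (Fin n → ℍ[ℝ])) (I : ℍ[ℝ]) : Set (Fin n → ℂ) := {z | psi I z ∈ Ω}

/-- second stem component -/
def Fb (f : (Fin n → ℍ[ℝ]) → ℍ[ℝ]) (I₀ J₀ : ℍ[ℝ]) : (Fin n → ℂ) → ℍ[ℝ] :=
  fun z => (I₀ - J₀)⁻¹ * (gsl f I₀ z - gsl f J₀ z)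

/-- first stem component -/
def Fa (f : (Fin n → ℍ[ℝ]) → ℍ[ℝ]) (I₀ J₀ : ℍ[ℝ]) : (Fin n → ℂ) → ℍ[ℝ] :=
  fun z => gsl f I₀ z - I₀ * Fb f I₀ J₀ z

/-- normal function (stem of the symmetrization) -/
def nsl (f : (Fin n → ℍ[ℝ]) → ℍ[ℝ]) (I₀ J₀ : ℍ[ℝ]) : (Fin n → ℂ) → ℂ :=
  fun z => ⟨(star (Fa f I₀ J₀ z) * Fa f I₀ J₀ z).re - (star (Fb f I₀ J₀ z) * Fb f I₀ J₀ z).re,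
    2 * (star (Fb f I₀ J₀ z) * Fa f I₀ J₀ z).re⟩

lemma inv_alg {I₀ J₀ : ℍ[ℝ]} (hI : I₀ ∈ SQ) (hJ : J₀ ∈ SQ) (hne : I₀ ≠ J₀) :
    (I₀ - J₀)⁻¹ * J₀ + I₀ * (I₀ - J₀)⁻¹ = 0 ∧
      (I₀ - J₀)⁻¹ * I₀ + I₀ * (I₀ - J₀)⁻¹ = 1 := by
  have hd : I₀ - J₀ ≠ 0 := sub_ne_zero.mpr hne
  set c := (I₀ - J₀)⁻¹ with hc
  have hc1 : (I₀ - J₀) * c = 1 := mul_inv_cancel₀ hd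
  have hc2 : c * (I₀ - J₀) = 1 := inv_mul_cancel₀ hd
  have e1 : ∀ x : ℍ[ℝ], c * x = c * (x * (I₀ - J₀)) * c := by
    intro x
    calc c * x = c * (x * 1) := by rw [mul_one]
      _ = c * (x * ((I₀ - J₀) * c)) := by rw [hc1]
      _ = c * (x * (I₀ - J₀)) * c := by simp only [mul_assoc]
  have e2 : ∀ x : ℍ[ℝ], x * c = c * ((I₀ - J₀) * x) * c := by
    intro x
    calc x * c = 1 * (x * c) := by rw [one_mul]
      _ = (c * (I₀ - J₀)) * (x * c) := by rw [hc2]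
      _ = c * ((I₀ - J₀) * x) * c := by simp only [mul_assoc]
  have hI2 := sq_mul_self hI
  have hJ2 := sq_mul_self hJ
  constructor
  · have h1 : c * J₀ + I₀ * c = c * (J₀ * (I₀ - J₀) + (I₀ - J₀) * I₀) * c := by
      rw [e1 J₀, e2 I₀, ← add_mul, ← mul_add]
    rw [h1]
    have h2 : J₀ * (I₀ - J₀) + (I₀ - J₀) * I₀ = 0 := by
      have h3 : J₀ * (I₀ - J₀) + (I₀ - J₀) * I₀ = I₀ * I₀ - J₀ * J₀ := by noncomm_ring
      rw [h3, hI2, hJ2, sub_self]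
    rw [h2, mul_zero, zero_mul]
  · have h1 : c * I₀ + I₀ * c = c * (I₀ * (I₀ - J₀) + (I₀ - J₀) * I₀) * c := by
      rw [e1 I₀, e2 I₀, ← add_mul, ← mul_add]
    rw [h1]
    have h2 : I₀ * (I₀ - J₀) + (I₀ - J₀) * I₀ = (I₀ - J₀) * (I₀ - J₀) := by
      have h3 : I₀ * (I₀ - J₀) + (I₀ - J₀) * I₀ - (I₀ - J₀) * (I₀ - J₀)
          = I₀ * I₀ - J₀ * J₀ := by noncomm_ring
      have h4 : I₀ * I₀ - J₀ * J₀ = 0 := by rw [hI2, hJ2, sub_self]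
      rw [h4] at h3
      exact sub_eq_zero.mp h3
    rw [h2]
    have h5 : c * ((I₀ - J₀) * (I₀ - J₀)) * c = (c * (I₀ - J₀)) * ((I₀ - J₀) * c) := by
      noncomm_ring
    rw [h5, hc2, hc1, one_mul]

lemma stem_deriv (hΩo : SliceOpen Ω) (hf : SliceRegular Ω f) {I₀ J₀ : ℍ[ℝ]}
    (hI₀ : I₀ ∈ SQ) (hJ₀ : J₀ ∈ SQ) (hne : I₀ ≠ J₀) {z : Fin n → ℂ}
    (hz : z ∈ Usl Ω I₀ ∩ Usl Ω J₀) :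
    ∃ M1 M2 : (Fin n → ℂ) →L[ℝ] ℍ[ℝ],
      HasFDerivAt (Fa f I₀ J₀) M1 z ∧ HasFDerivAt (Fb f I₀ J₀) M2 z ∧
      (∀ v, M1 (Complex.I • v) = -(M2 v)) ∧ (∀ v, M2 (Complex.I • v) = M1 v) := by
  obtain ⟨L1, hL1, hcr1⟩ := sliceReg_crh hΩo hf hI₀ z hz.1
  obtain ⟨L2, hL2, hcr2⟩ := sliceReg_crh hΩo hf hJ₀ z hz.2
  obtain ⟨halg1, halg2⟩ := inv_alg hI₀ hJ₀ hne
  set c := (I₀ - J₀)⁻¹ with hc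
  set M2 : (Fin n → ℂ) →L[ℝ] ℍ[ℝ] := c • (L1 - L2) with hM2
  set M1 : (Fin n → ℂ) →L[ℝ] ℍ[ℝ] := L1 - I₀ • M2 with hM1
  have hFb : HasFDerivAt (Fb f I₀ J₀) M2 z := by
    have h := (hL1.sub hL2).const_mul c
    unfold Fb gsl
    exact h
  have hFa : HasFDerivAt (Fa f I₀ J₀) M1 z := by
    have h := hL1.sub (hFb.const_mul I₀)
    unfold Fa gsl
    exact h
  have hkey : ∀ a b : ℍ[ℝ], c * (I₀ * a - J₀ * b) = a - I₀ * (c * (a - b)) := by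
    intro a b
    have h1 : c * I₀ = 1 - I₀ * c := eq_sub_of_add_eq halg2
    have h2 : c * J₀ = -(I₀ * c) := eq_neg_of_add_eq_zero_left halg1
    calc c * (I₀ * a - J₀ * b) = (c * I₀) * a - (c * J₀) * b := by
          rw [mul_sub, mul_assoc, mul_assoc]
      _ = (1 - I₀ * c) * a - (-(I₀ * c)) * b := by rw [h1, h2]
      _ = a - I₀ * (c * (a - b)) := by noncomm_ring
  have hcrM2 : ∀ v, M2 (Complex.I • v) = M1 v := by
    intro v
    simp only [hM2, hM1, ContinuousLinearMap.smul_apply, ContinuousLinearMap.sub_apply,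
      hcr1, hcr2, smul_eq_mul]
    exact hkey (L1 v) (L2 v)
  refine ⟨M1, M2, hFa, hFb, ?_, hcrM2⟩
  intro v
  have h3 : M1 (Complex.I • v) = I₀ * L1 v - I₀ * M1 v := by
    simp only [hM1, ContinuousLinearMap.sub_apply, ContinuousLinearMap.smul_apply,
      hcr1, smul_eq_mul, hcrM2 v]
  rw [h3, hM1]
  simp only [ContinuousLinearMap.sub_apply, ContinuousLinearMap.smul_apply,
    ContinuousLinearMap.smul_apply, smul_eq_mul, hM2, ContinuousLinearMap.sub_apply]
  have h4 : ∀ a w : ℍ[ℝ], I₀ * a - I₀ * (a - I₀ * w) = I₀ * (I₀ * w) := by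
    intro a w; noncomm_ring
  rw [h4, ← mul_assoc, sq_mul_self hI₀, neg_one_mul]

lemma crh_G (hΩo : SliceOpen Ω) (hf : SliceRegular Ω f) {I₀ J₀ : ℍ[ℝ]}
    (hI₀ : I₀ ∈ SQ) (hJ₀ : J₀ ∈ SQ) (hne : I₀ ≠ J₀) {K : ℍ[ℝ]} (hK : K ∈ SQ) :
    CRH (Usl Ω I₀ ∩ Usl Ω J₀) (fun z => Fa f I₀ J₀ z + K * Fb f I₀ J₀ z) K := by
  intro z hz
  obtain ⟨M1, M2, hFa, hFb, hcr1, hcr2⟩ := stem_deriv hΩo hf hI₀ hJ₀ hne hz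
  refine ⟨M1 + K • M2, hFa.add (hFb.const_mul K), fun v => ?_⟩
  simp only [ContinuousLinearMap.add_apply, ContinuousLinearMap.smul_apply, smul_eq_mul,
    hcr1, hcr2]
  rw [mul_add, ← mul_assoc, sq_mul_self hK, neg_one_mul]
  abel

/-- real part as a continuous linear map -/
def rCLM : ℍ[ℝ] →L[ℝ] ℝ :=
  LinearMap.toContinuousLinearMap (QuaternionAlgebra.reₗ (-1 : ℝ) (0 : ℝ) (-1 : ℝ))

/-- star as a continuous linear map -/
def sCLM : ℍ[ℝ] →L[ℝ] ℍ[ℝ] :=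
  LinearMap.toContinuousLinearMap
    { toFun := star
      map_add' := fun a b => star_add a b
      map_smul' := fun r p => by
        ext <;> simp [Quaternion.re_star, Quaternion.re_smul] }

@[simp] lemma rCLM_apply (p : ℍ[ℝ]) : rCLM p = p.re := rfl
@[simp] lemma sCLM_apply (p : ℍ[ℝ]) : sCLM p = star p := rfl

lemma re_id1 (a1 a2 m1 m2 : ℍ[ℝ]) :
    (star a1 * -m2 + star (-m2) * a1).re - (star a2 * m1 + star m1 * a2).re
      = -(2 * (star a2 * m1 + star m2 * a1).re) := by
  simp [Quaternion.re_mul, Quaternion.re_add, Quaternion.re_neg, Quaternion.imI_neg,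
    Quaternion.imJ_neg, Quaternion.imK_neg, Quaternion.re_star, Quaternion.imI_star,
    Quaternion.imJ_star, Quaternion.imK_star]
  ring

lemma re_id2 (a1 a2 m1 m2 : ℍ[ℝ]) :
    2 * (star a2 * -m2 + star m1 * a1).re
      = (star a1 * m1 + star m1 * a1).re - (star a2 * m2 + star m2 * a2).re := by
  simp [Quaternion.re_mul, Quaternion.re_add, Quaternion.re_neg, Quaternion.imI_neg,
    Quaternion.imJ_neg, Quaternion.imK_neg, Quaternion.re_star, Quaternion.imI_star,
    Quaternion.imJ_star, Quaternion.imK_star]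
  ring

lemma diffOn_nsl (hΩo : SliceOpen Ω) (hf : SliceRegular Ω f) {I₀ J₀ : ℍ[ℝ]}
    (hI₀ : I₀ ∈ SQ) (hJ₀ : J₀ ∈ SQ) (hne : I₀ ≠ J₀) :
    DifferentiableOn ℂ (nsl f I₀ J₀) (Usl Ω I₀ ∩ Usl Ω J₀) := by
  intro z hz
  obtain ⟨M1, M2, hFa, hFb, hcr1, hcr2⟩ := stem_deriv hΩo hf hI₀ hJ₀ hne hz
  set A := Fa f I₀ J₀ with hA
  set B := Fb f I₀ J₀ with hB
  -- derivative of w ↦ (star (A w) * A w).re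
  have hsA : HasFDerivAt (fun w => star (A w)) (sCLM.comp M1) z :=
    (sCLM.hasFDerivAt).comp z hFa
  have hsB : HasFDerivAt (fun w => star (B w)) (sCLM.comp M2) z :=
    (sCLM.hasFDerivAt).comp z hFb
  have hp1 : HasFDerivAt (fun w => star (A w) * A w)
      (star (A z) • M1 + (sCLM.comp M1).smulRight (A z)) z := hsA.mul' hFa
  have hp2 : HasFDerivAt (fun w => star (B w) * B w)
      (star (B z) • M2 + (sCLM.comp M2).smulRight (B z)) z := hsB.mul' hFb
  have hp3 : HasFDerivAt (fun w => star (B w) * A w)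
      (star (B z) • M1 + (sCLM.comp M2).smulRight (A z)) z := hsB.mul' hFa
  set D1 : (Fin n → ℂ) →L[ℝ] ℝ :=
    rCLM.comp (star (A z) • M1 + (sCLM.comp M1).smulRight (A z))
      - rCLM.comp (star (B z) • M2 + (sCLM.comp M2).smulRight (B z)) with hD1
  set D2 : (Fin n → ℂ) →L[ℝ] ℝ :=
    (2 : ℝ) • (rCLM.comp (star (B z) • M1 + (sCLM.comp M2).smulRight (A z))) with hD2
  have hN1 : HasFDerivAt (fun w => (star (A w) * A w).re - (star (B w) * B w).re) D1 z :=
    ((rCLM.hasFDerivAt).comp z hp1).sub ((rCLM.hasFDerivAt).comp z hp2)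
  have hN2 : HasFDerivAt (fun w => 2 * (star (B w) * A w).re) D2 z := by
    have := ((rCLM.hasFDerivAt).comp z hp3).const_mul (2 : ℝ)
    simpa [hD2, smul_eq_mul] using this
  set D : (Fin n → ℂ) →L[ℝ] ℂ := Complex.ofRealCLM.comp D1 + D2.smulRight Complex.I with hD
  have hnd : HasFDerivAt (nsl f I₀ J₀) D z := by
    have h1 : nsl f I₀ J₀ = fun w =>
        (((star (A w) * A w).re - (star (B w) * B w).re : ℝ) : ℂ)
          + (2 * (star (B w) * A w).re : ℝ) • Complex.I := by
      funext w
      apply Complex.ext <;> simp [nsl, hA, hB, Complex.real_smul]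
    rw [h1]
    exact ((Complex.ofRealCLM.hasFDerivAt).comp z hN1).add (hN2.smul_const Complex.I)
  -- Cauchy-Riemann for D
  have happD1 : ∀ w, D1 w = (star (A z) * M1 w + star (M1 w) * A z).re
      - (star (B z) * M2 w + star (M2 w) * B z).re := by
    intro w
    simp [hD1, ContinuousLinearMap.sub_apply, ContinuousLinearMap.comp_apply,
      ContinuousLinearMap.add_apply, ContinuousLinearMap.smul_apply,
      ContinuousLinearMap.smulRight_apply, smul_eq_mul]
  have happD2 : ∀ w, D2 w = 2 * (star (B z) * M1 w + star (M2 w) * A z).re := by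
    intro w
    simp [hD2, ContinuousLinearMap.smul_apply, ContinuousLinearMap.comp_apply,
      ContinuousLinearMap.add_apply, ContinuousLinearMap.smulRight_apply, smul_eq_mul]
    ring
  have hcrD : ∀ v, D (Complex.I • v) = Complex.I • D v := by
    intro v
    have e1 : D1 (Complex.I • v) = -(D2 v) := by
      rw [happD1, happD2, hcr1 v, hcr2 v]
      exact re_id1 (A z) (B z) (M1 v) (M2 v)
    have e2 : D2 (Complex.I • v) = D1 v := by
      rw [happD2, happD1, hcr1 v, hcr2 v]
      exact re_id2 (A z) (B z) (M1 v) (M2 v)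
    have happD : ∀ w, D w = Complex.ofReal (D1 w) + (D2 w) • Complex.I := by
      intro w
      simp [hD, ContinuousLinearMap.add_apply, ContinuousLinearMap.comp_apply,
        ContinuousLinearMap.smulRight_apply]
    rw [happD, happD, e1, e2]
    apply Complex.ext <;> simp [Complex.real_smul]
  exact (differentiableAt_complex_of_cr D hnd hcrD).differentiableWithinAt

-- ================= real-point identities =================

lemma gsl_real_eq {I J : ℍ[ℝ]} {z : Fin n → ℂ} (hz : ∀ k, (z k).im = 0) :
    gsl f I z = gsl f J z := by
  unfold gsl
  rw [psi_real I hz, psi_real J hz]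

lemma Fb_real {I₀ J₀ : ℍ[ℝ]} {z : Fin n → ℂ} (hz : ∀ k, (z k).im = 0) :
    Fb f I₀ J₀ z = 0 := by
  unfold Fb
  rw [gsl_real_eq (I := I₀) (J := J₀) hz, sub_self, mul_zero]

lemma Fa_real {I₀ J₀ : ℍ[ℝ]} {z : Fin n → ℂ} (hz : ∀ k, (z k).im = 0) :
    Fa f I₀ J₀ z = f (psi I₀ z) := by
  unfold Fa
  rw [Fb_real hz, mul_zero, sub_zero]
  rfl

lemma G_real {I₀ J₀ K : ℍ[ℝ]} {z : Fin n → ℂ} (hz : ∀ k, (z k).im = 0) :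
    Fa f I₀ J₀ z + K * Fb f I₀ J₀ z = f (psi K z) := by
  rw [Fb_real hz, mul_zero, add_zero, Fa_real hz]
  unfold psi
  congr 1
  funext k
  simp [hz k]

lemma re_coe_mul (K : ℍ[ℝ]) (r : ℝ) : ((r : ℍ[ℝ]) * K).re = r * K.re := by
  simp [Quaternion.re_mul]

/-- at a zero of a slice, the normal function vanishes -/
lemma nsl_zero_of_G {I₀ J₀ K : ℍ[ℝ]} (hK : K ∈ SQ) {z : Fin n → ℂ}
    (h : Fa f I₀ J₀ z + K * Fb f I₀ J₀ z = 0) : nsl f I₀ J₀ z = 0 := by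
  set A := Fa f I₀ J₀ z with hA
  set B := Fb f I₀ J₀ z with hB
  have hAe : A = -(K * B) := eq_neg_of_add_eq_zero_left h
  have hsA : star A = star B * K := by
    rw [hAe, star_neg, star_mul, sq_star hK, mul_neg, neg_neg]
  have h1 : (star A * A).re = (star B * B).re := by
    have h4 : star B * K * -(K * B) = -(star B * ((K * K) * B)) := by noncomm_ring
    rw [hsA, hAe, h4, sq_mul_self hK]
    simp
  have h2 : (star B * A).re = 0 := by
    rw [hAe, mul_neg, Quaternion.re_neg, re_mul_comm]
    rw [mul_assoc, re_mul_comm K (B * star B), Quaternion.self_mul_star]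
    rw [re_coe_mul K (Quaternion.normSq B), sq_re hK]
    simp
  apply Complex.ext <;> simp [nsl, ← hA, ← hB, h1, h2]

/-- on real points where the normal function vanishes, f vanishes -/
lemma f_zero_of_nsl_real {I₀ J₀ : ℍ[ℝ]} {z : Fin n → ℂ} (hz : ∀ k, (z k).im = 0)
    (h : nsl f I₀ J₀ z = 0) : f (psi I₀ z) = 0 := by
  have h1 := congrArg Complex.re h
  simp only [nsl, Fb_real (f := f) (I₀ := I₀) (J₀ := J₀) hz] at h1
  rw [star_zero, zero_mul, Quaternion.re_zero, sub_zero, Quaternion.star_mul_self] at h1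
  have h2 : Quaternion.normSq (Fa f I₀ J₀ z) = 0 := by
    simpa using h1
  have h3 := Quaternion.normSq_eq_zero.mp h2
  rw [← Fa_real (f := f) (I₀ := I₀) (J₀ := J₀) hz]
  exact h3

lemma psi_neg (I : ℍ[ℝ]) (w : Fin n → ℂ) :
    psi (-I) w = psi I (fun k => (starRingEnd ℂ) (w k)) := by
  funext k
  simp [psi, Complex.conj_re, Complex.conj_im, smul_neg, neg_smul]

lemma dist_conj_pi (w u : Fin n → ℂ) :
    dist (fun k => (starRingEnd ℂ) (w k)) (fun k => (starRingEnd ℂ) (u k)) = dist w u := by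
  refine le_antisymm ?_ ?_
  · refine (dist_pi_le_iff (f := fun k => (starRingEnd ℂ) (w k))
      (g := fun k => (starRingEnd ℂ) (u k)) dist_nonneg).2 (fun k => ?_)
    rw [Complex.dist_conj_conj]
    exact dist_le_pi_dist w u k
  · refine (dist_pi_le_iff (f := w) (g := u) dist_nonneg).2 (fun k => ?_)
    rw [← Complex.dist_conj_conj (w k) (u k)]
    exact dist_le_pi_dist (fun k => (starRingEnd ℂ) (w k)) (fun k => (starRingEnd ℂ) (u k)) k

-- ================= the set Z and the identity principle on Ω =================

def Zset (Ω : Set (Fin n → ℍ[ℝ])) (f : (Fin n → ℍ[ℝ]) → ℍ[ℝ]) : Set (Fin n → ℍ[ℝ]) :=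
  {q | q ∈ Ω ∧ ∀ J ∈ SQ, ∀ u, psi J u = q → ∃ ε > 0,
    (∀ w ∈ Metric.ball u ε, psi J w ∈ Ω) ∧ ∀ w ∈ Metric.ball u ε, f (psi J w) = 0}

lemma core (hΩo : SliceOpen Ω) (hf : SliceRegular Ω f) {I : ℍ[ℝ]} {z : Fin n → ℂ} {δ : ℝ}
    (hI : I ∈ SQ) (hδ : 0 < δ) (hball : ∀ w ∈ Metric.ball z δ, psi I w ∈ Ω)
    (hvan : ∀ w ∈ Metric.ball z δ, f (psi I w) = 0) : psi I z ∈ Zset Ω f := by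
  refine ⟨hball z (mem_ball_self hδ), ?_⟩
  intro J hJ u hu
  by_cases hreal : ∀ k, (z k).im = 0
  · have huz : u = z := psi_eq_real hI hJ hreal hu
    subst huz
    have hUJ : IsOpen (Usl Ω J) := hΩo J hJ
    have hzJ : u ∈ Usl Ω J := by
      show psi J u ∈ Ω
      rw [psi_real J hreal, ← psi_real I hreal]
      exact hball u (mem_ball_self hδ)
    obtain ⟨ε, hε, hsubJ⟩ := Metric.isOpen_iff.mp hUJ u hzJ
    have hε' : 0 < min ε δ := lt_min hε hδ
    refine ⟨min ε δ, hε', ?_, ?_⟩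
    · exact fun w hw => hsubJ (ball_subset_ball (min_le_left _ _) hw)
    · apply crh_spread_real (sq_mul_self hJ)
        ((sliceReg_crh hΩo hf hJ).mono
          (fun w hw => hsubJ (ball_subset_ball (min_le_left _ _) hw)))
        hε' hreal (Set.Subset.refl _)
      intro x hx hxre
      have hx' : x ∈ Metric.ball u δ := ball_subset_ball (min_le_right _ _) hx
      rw [psi_real J hxre, ← psi_real I hxre]
      exact hvan x hx'
  · push_neg at hreal
    obtain ⟨k₀, hk₀⟩ := hreal
    rcases psi_eq_nonreal hI hJ hk₀ hu with ⟨hJI, huz⟩ | ⟨hJI, huz⟩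
    · subst hJI; subst huz
      exact ⟨δ, hδ, hball, hvan⟩
    · subst hJI; subst huz
      refine ⟨δ, hδ, ?_, ?_⟩
      · intro w hw
        rw [psi_neg]
        apply hball
        rw [mem_ball] at hw ⊢
        have h1 : dist (fun k => (starRingEnd ℂ) (w k)) z
            = dist w (fun k => (starRingEnd ℂ) (z k)) := by
          rw [← dist_conj_pi w (fun k => (starRingEnd ℂ) (z k))]
          congr 1
          funext k
          simp
        rw [h1]
        exact hw
      · intro w hw
        rw [psi_neg]
        apply hvan
        rw [mem_ball] at hw ⊢
        have h1 : dist (fun k => (starRingEnd ℂ) (w k)) z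
            = dist w (fun k => (starRingEnd ℂ) (z k)) := by
          rw [← dist_conj_pi w (fun k => (starRingEnd ℂ) (z k))]
          congr 1
          funext k
          simp
        rw [h1]
        exact hw

lemma Zset_sliceOpen (hΩo : SliceOpen Ω) (hf : SliceRegular Ω f) :
    SliceOpen (Zset Ω f) := by
  intro I hI
  rw [Metric.isOpen_iff]
  intro z hz
  obtain ⟨ε, hε, hballΩ, hvan⟩ := hz.2 I hI z rfl
  refine ⟨ε / 2, by linarith, ?_⟩
  intro w hw
  show psi I w ∈ Zset Ω f
  have hsub : Metric.ball w (ε / 2) ⊆ Metric.ball z ε := by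
    apply ball_subset_ball'
    rw [mem_ball] at hw
    linarith
  exact core hΩo hf hI (by linarith) (fun x hx => hballΩ x (hsub hx))
    (fun x hx => hvan x (hsub hx))

lemma Zset_compl_sliceOpen (hΩo : SliceOpen Ω) (hf : SliceRegular Ω f) :
    SliceOpen {q | q ∈ Ω ∧ q ∉ Zset Ω f} := by
  intro I hI
  rw [Metric.isOpen_iff]
  rintro z ⟨hzΩ, hzZ⟩
  obtain ⟨ρ, hρ, hsub⟩ := Metric.isOpen_iff.mp (hΩo I hI) z hzΩ
  refine ⟨ρ / 8, by linarith, ?_⟩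
  intro w hw
  rw [mem_ball] at hw
  constructor
  · exact hsub (by rw [mem_ball]; linarith)
  · intro hwZ
    apply hzZ
    obtain ⟨ε₀, hε₀, hballΩ₀, hvan₀⟩ := hwZ.2 I hI w rfl
    have hbig : Metric.ball w (3 * ρ / 4) ⊆ Metric.ball z ρ := by
      apply ball_subset_ball'
      linarith
    have hsmall : ∀ x ∈ Metric.ball w (min ε₀ (3 * ρ / 4)), f (psi I x) = 0 :=
      fun x hx => hvan₀ x (ball_subset_ball (min_le_left _ _) hx)
    have hvbig := crh_spread_ball (sq_mul_self hI)
      ((sliceReg_crh hΩo hf hI).mono (hbig.trans hsub))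
      (lt_min hε₀ (by linarith)) (min_le_right _ _) (Set.Subset.refl _) hsmall
    have hzsub : Metric.ball z (ρ / 2) ⊆ Metric.ball w (3 * ρ / 4) := by
      apply ball_subset_ball'
      rw [dist_comm]
      linarith
    exact core hΩo hf hI (by linarith)
      (fun x hx => hsub (ball_subset_ball (by linarith) hx))
      (fun x hx => hvbig x (hzsub hx))

lemma global_vanish (hΩ : Ω ⊆ HSliceCone n) (hΩo : SliceOpen Ω)
    (hconn : @IsConnected _ (sliceTop n) Ω) (hf : SliceRegular Ω f)
    {I₁ : ℍ[ℝ]} (hI₁ : I₁ ∈ SQ) {x₀ : Fin n → ℂ} (hx₀re : ∀ k, (x₀ k).im = 0) {ε₀ : ℝ}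
    (hε₀ : 0 < ε₀) (hmem : ∀ w ∈ Metric.ball x₀ ε₀, psi I₁ w ∈ Ω)
    (hvanreal : ∀ w ∈ Metric.ball x₀ ε₀, (∀ k, (w k).im = 0) → f (psi I₁ w) = 0) :
    ∀ q ∈ Ω, f q = 0 := by
  have hvan : ∀ w ∈ Metric.ball x₀ ε₀, f (psi I₁ w) = 0 :=
    crh_spread_real (sq_mul_self hI₁) ((sliceReg_crh hΩo hf hI₁).mono hmem) hε₀ hx₀re
      (Set.Subset.refl _) hvanreal
  have hZne : psi I₁ x₀ ∈ Zset Ω f := core hΩo hf hI₁ hε₀ hmem hvan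
  have hsub : Ω ⊆ Zset Ω f := by
    by_contra hns
    rw [Set.not_subset] at hns
    obtain ⟨q1, hq1Ω, hq1Z⟩ := hns
    have hpre := hconn.2
    have h := hpre (Zset Ω f) {q | q ∈ Ω ∧ q ∉ Zset Ω f}
      (Zset_sliceOpen hΩo hf) (Zset_compl_sliceOpen hΩo hf)
      (fun q hq => by
        by_cases hqZ : q ∈ Zset Ω f
        · exact Or.inl hqZ
        · exact Or.inr ⟨hq, hqZ⟩)
      ⟨psi I₁ x₀, hZne.1, hZne⟩
      ⟨q1, hq1Ω, hq1Ω, hq1Z⟩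
    obtain ⟨q2, _, hq2Z, _, hq2nZ⟩ := h
    exact hq2nZ hq2Z
  intro q hq
  obtain ⟨I, hI, hqr⟩ := Set.mem_iUnion₂.mp (hΩ hq)
  obtain ⟨z, rfl⟩ := hqr
  obtain ⟨ε, hε, _, hvanq⟩ := (hsub hq).2 I hI z rfl
  exact hvanq z (mem_ball_self hε)

end ZS

/-- the zero set of a weakly slice regular function on a
self-stem-preserving slice-domain is path-slice analytic. -/
theorem zeroSet_analytic {n : ℕ} (Ω : Set (Fin n → ℍ[ℝ])) (hΩ : Ω ⊆ HSliceCone n)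
    (hdom : SliceDomain Ω) (hssp : SelfStemPreserving Ω)
    (f : (Fin n → ℍ[ℝ]) → ℍ[ℝ]) (hf : SliceRegular Ω f) :
    PathSliceAnalytic Ω {q ∈ Ω | f q = 0} := by
  classical
  by_cases hall : ∀ q ∈ Ω, f q = 0
  · left
    exact Set.ext fun q => ⟨fun h => h.1, fun h => ⟨h, hall q h⟩⟩
  · right
    push_neg at hall
    obtain ⟨q₀, hq₀Ω, hq₀⟩ := hall
    intro γ hγ
    obtain ⟨I₀, hI₀, J₀, hJ₀, hne⟩ := hssp.2.1 γ hγ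
    have hI₀S : I₀ ∈ SQ := hI₀.1
    have hJ₀S : J₀ ∈ SQ := hJ₀.1
    have hΩo : SliceOpen Ω := hdom.1
    have hγc : Continuous γ := hγ.1.1
    have hγre : ∀ k, ((γ 0) k).im = 0 := hγ.1.2
    set W0 : Set (Fin n → ℂ) := ZS.Usl Ω I₀ ∩ ZS.Usl Ω J₀ with hW0
    have hW0o : IsOpen W0 := (hΩo I₀ hI₀S).inter (hΩo J₀ hJ₀S)
    have hγW0 : ∀ t, γ t ∈ W0 := fun t => ⟨hI₀.2 t, hJ₀.2 t⟩
    obtain ⟨r, hr, hrsub⟩ := Metric.isOpen_iff.mp hW0o (γ 1) (hγW0 1)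
    set nn : (Fin n → ℂ) → ℂ := ZS.nsl f I₀ J₀ with hnn
    have hnd : DifferentiableOn ℂ nn W0 := ZS.diffOn_nsl hΩo hf hI₀S hJ₀S hne
    have hEne : ∃ z ∈ Metric.ball (γ 1) r, nn z ≠ 0 := by
      by_contra hc
      push_neg at hc
      obtain ⟨ρ₀, hρ₀, hρsub, hρeq⟩ := ZS.spread_path hW0o hnd γ hγc hγW0 (t₀ := 1)
        ⟨r, hr, hrsub, fun w hw => hc w hw⟩ 0
      have hvanreal : ∀ w ∈ Metric.ball (γ 0) ρ₀, (∀ k, (w k).im = 0) → f (psi I₀ w) = 0 := by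
        intro w hw hwre
        exact ZS.f_zero_of_nsl_real hwre (hρeq hw)
      have hglobal := ZS.global_vanish hΩ hΩo hdom.2 hf hI₀S hγre hρ₀
        (fun w hw => (hρsub hw).1) hvanreal
      exact hq₀ (hglobal q₀ hq₀Ω)
    have hprop : ∀ K, K ∈ SGamma Ω γ → ∃ δ, 0 < δ ∧ δ ≤ r ∧
        ∀ w ∈ Metric.ball (γ 1) δ, f (psi K w) = ZS.Fa f I₀ J₀ w + K * ZS.Fb f I₀ J₀ w := by
      intro K hK
      have hKS : K ∈ SQ := hK.1
      set UK := W0 ∩ ZS.Usl Ω K with hUK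
      have hUKo : IsOpen UK := hW0o.inter (hΩo K hKS)
      have hγUK : ∀ t, γ t ∈ UK := fun t => ⟨hγW0 t, hK.2 t⟩
      set h : (Fin n → ℂ) → ℍ[ℝ] :=
        fun z => ZS.gsl f K z - (ZS.Fa f I₀ J₀ z + K * ZS.Fb f I₀ J₀ z) with hh
      have hcrh : ZS.CRH UK h K := by
        apply ZS.CRH.sub
        · exact (ZS.sliceReg_crh hΩo hf hKS).mono (fun z hz => hz.2)
        · exact (ZS.crh_G hΩo hf hI₀S hJ₀S hne hKS).mono (fun z hz => hz.1)
      obtain ⟨ρ, hρ, hρsub⟩ := Metric.isOpen_iff.mp hUKo (γ 0) (hγUK 0)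
      have hvan0 : ∀ w ∈ Metric.ball (γ 0) ρ, h w = 0 := by
        apply ZS.crh_spread_real (ZS.sq_mul_self hKS) (hcrh.mono hρsub) hρ hγre
          (Set.Subset.refl _)
        intro x hx hxre
        show ZS.gsl f K x - (ZS.Fa f I₀ J₀ x + K * ZS.Fb f I₀ J₀ x) = 0
        rw [ZS.G_real (f := f) (I₀ := I₀) (J₀ := J₀) (K := K) hxre]
        show f (psi K x) - f (psi K x) = 0
        exact sub_self _
      obtain ⟨δ₁, hδ₁, hδsub, hδvan⟩ := ZS.crh_spread_path hUKo (ZS.sq_mul_self hKS) hcrh γ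
        hγc hγUK (t₀ := 0) ⟨ρ, hρ, hρsub, hvan0⟩ 1
      refine ⟨min δ₁ r, lt_min hδ₁ hr, min_le_right _ _, ?_⟩
      intro w hw
      have hw1 : w ∈ Metric.ball (γ 1) δ₁ := Metric.ball_subset_ball (min_le_left _ _) hw
      have h2 := hδvan w hw1
      have h3 : ZS.gsl f K w - (ZS.Fa f I₀ J₀ w + K * ZS.Fb f I₀ J₀ w) = 0 := h2
      exact sub_eq_zero.mp h3
    set rI : ℍ[ℝ] → ℝ := fun K => if hK : K ∈ SGamma Ω γ then (hprop K hK).choose else r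
      with hrI
    refine ⟨r, hr, rI, ?_, ?_⟩
    · intro K hK
      simp only [hrI]
      rw [dif_pos hK]
      obtain ⟨h1, h2, _⟩ := (hprop K hK).choose_spec
      exact ⟨h1, h2⟩
    · set E : Set (Fin n → ℂ) := Metric.ball (γ 1) r ∩ {z | nn z = 0} with hE
      refine ⟨E, ⟨Set.inter_subset_left, ?_⟩, ?_, ?_⟩
      · intro z hz
        refine ⟨Metric.ball (γ 1) r, Set.Subset.refl _, Metric.isOpen_ball, hz, 1,
          fun _ => nn, fun _ => hnd.mono hrsub, ?_⟩
        ext w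
        constructor
        · rintro ⟨⟨h1, h2⟩, h3⟩
          exact ⟨h3, fun _ => h2⟩
        · rintro ⟨h1, h2⟩
          exact ⟨⟨h1, h2 0⟩, h1⟩
      · intro hEeq
        obtain ⟨z, hz, hznn⟩ := hEne
        have hzE : z ∈ E := by rw [hEeq]; exact hz
        exact hznn hzE.2
      · intro K hK p hp
        obtain ⟨z, hz⟩ := hp.2.1
        have hdist : dist p (psi K (γ 1)) < rI K := hp.2.2
        rw [← hz] at hdist
        have hKS : K ∈ SQ := hK.1
        rw [ZS.dist_psi hKS] at hdist
        simp only [hrI] at hdist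
        rw [dif_pos hK] at hdist
        obtain ⟨hδpos, hδler, hδeq⟩ := (hprop K hK).choose_spec
        have hzball : z ∈ Metric.ball (γ 1) ((hprop K hK).choose) := by
          rw [Metric.mem_ball]; exact hdist
        have hG : ZS.Fa f I₀ J₀ z + K * ZS.Fb f I₀ J₀ z = 0 := by
          rw [← hδeq z hzball, hz]
          exact hp.1.2
        refine ⟨z, ⟨?_, ZS.nsl_zero_of_G hKS hG⟩, hz⟩
        rw [Metric.mem_ball]
        exact lt_of_lt_of_le hdist hδler

end
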